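/- Let P₀ and P₁ be probability measures, Φ a {0,1}-valued test with α = E_{P₀}[Φ] ∈ (0,1), α ≠ 1/2, and β = 1 − E_{P₁}[Φ]. Then α + β ≥ 1 − √((α − 1/2)/ln(α/(1−α)))·√(2·KL(P₁‖P₀)). -/

import Mathlib

open Real Set

/-! Auxiliary definitions for the Kearns–Saul inequality. -/

noncomputable def Zf (a l : ℝ) : ℝ := 1 - a + a * Real.exp l
noncomputable def tf (a l : ℝ) : ℝ := a * Real.exp l / Zf a l
noncomputable def ff (a s l : ℝ) : ℝ := Real.log (Zf a l) - a * l - s * l ^ 2 / 2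
noncomputable def f1 (a s l : ℝ) : ℝ := tf a l - a - s * l
noncomputable def f2 (a s l : ℝ) : ℝ := tf a l * (1 - tf a l) - s

lemma Zpos {a : ℝ} (h0 : 0 < a) (h1 : a < 1) (l : ℝ) : 0 < Zf a l := by
  have h2 : 0 < a * Real.exp l := mul_pos h0 (Real.exp_pos l)
  unfold Zf; linarith

lemma hasDerivAt_Z (a l : ℝ) : HasDerivAt (Zf a) (a * Real.exp l) l := by
  exact ((Real.hasDerivAt_exp l).const_mul a).const_add (1 - a)

lemma hasDerivAt_ff {a : ℝ} (h0 : 0 < a) (h1 : a < 1) (s l : ℝ) :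
    HasDerivAt (ff a s) (f1 a s l) l := by
  have hZ := hasDerivAt_Z a l
  have hlog : HasDerivAt (fun x => Real.log (Zf a x)) (a * Real.exp l / Zf a l) l :=
    hZ.log (ne_of_gt (Zpos h0 h1 l))
  have h2 : HasDerivAt (fun x : ℝ => a * x) a l := by
    simpa using (hasDerivAt_id l).const_mul a
  have h3 : HasDerivAt (fun x : ℝ => s * x ^ 2 / 2) (s * l) l := by
    have h4 := ((hasDerivAt_pow 2 l).const_mul s).div_const 2
    exact h4.congr_deriv (by push_cast; ring)
  have := (hlog.sub h2).sub h3
  exact this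

lemma hasDerivAt_f1 {a : ℝ} (h0 : 0 < a) (h1 : a < 1) (s l : ℝ) :
    HasDerivAt (f1 a s) (f2 a s l) l := by
  have hZ := hasDerivAt_Z a l
  have hZp := Zpos h0 h1 l
  have hu : HasDerivAt (fun x => a * Real.exp x) (a * Real.exp l) l :=
    (Real.hasDerivAt_exp l).const_mul a
  have ht : HasDerivAt (tf a)
      ((a * Real.exp l * Zf a l - a * Real.exp l * (a * Real.exp l)) / (Zf a l) ^ 2) l :=
    hu.div hZ (ne_of_gt hZp)
  have ht' : HasDerivAt (tf a) (tf a l * (1 - tf a l)) l := by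
    convert ht using 1
    have hne := hZp.ne'
    simp only [tf]
    field_simp
  have hlin : HasDerivAt (fun x : ℝ => s * x) s l := by
    simpa using (hasDerivAt_id l).const_mul s
  have := (ht'.sub_const a).sub hlin
  exact this

/-- Both double-root tangent arguments: if `f'' ≤ 0` on `[u,w]` and `f v = f' v = 0`
for some `v ∈ [u,w]`, then `f ≤ 0` on `[u,w]`. -/
lemma concave_piece {a s : ℝ} (h0 : 0 < a) (h1 : a < 1) {u v w : ℝ} (huv : u ≤ v) (hvw : v ≤ w)
    (hcc : ∀ x ∈ Icc u w, f2 a s x ≤ 0) (hv0 : ff a s v = 0) (hv1 : f1 a s v = 0) :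
    ∀ x ∈ Icc u w, ff a s x ≤ 0 := by
  have hdff : Differentiable ℝ (ff a s) := fun l => (hasDerivAt_ff h0 h1 s l).differentiableAt
  have hdf1 : Differentiable ℝ (f1 a s) := fun l => (hasDerivAt_f1 h0 h1 s l).differentiableAt
  have hderiv : deriv (ff a s) = f1 a s := funext fun l => (hasDerivAt_ff h0 h1 s l).deriv
  have hderiv1 : deriv (f1 a s) = f2 a s := funext fun l => (hasDerivAt_f1 h0 h1 s l).deriv
  have hvmem : v ∈ Icc u w := ⟨huv, hvw⟩
  have hant : AntitoneOn (f1 a s) (Icc u w) := by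
    apply antitoneOn_of_deriv_nonpos (convex_Icc u w) hdf1.continuous.continuousOn
      hdf1.differentiableOn
    intro x hx
    rw [hderiv1]
    exact hcc x (interior_subset hx)
  intro x hx
  rcases le_total x v with hxv | hvx
  · have hmono : MonotoneOn (ff a s) (Icc u v) := by
      apply monotoneOn_of_deriv_nonneg (convex_Icc u v) hdff.continuous.continuousOn
        hdff.differentiableOn
      intro y hy
      rw [interior_Icc] at hy
      rw [hderiv]
      have hymem : y ∈ Icc u w := ⟨le_of_lt hy.1, le_trans (le_of_lt hy.2) hvw⟩
      have := hant hymem hvmem (le_of_lt hy.2)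
      linarith [hv1 ▸ this]
    have := hmono ⟨hx.1, hxv⟩ ⟨huv, le_refl v⟩ hxv
    linarith [hv0 ▸ this]
  · have hantf : AntitoneOn (ff a s) (Icc v w) := by
      apply antitoneOn_of_deriv_nonpos (convex_Icc v w) hdff.continuous.continuousOn
        hdff.differentiableOn
      intro y hy
      rw [interior_Icc] at hy
      rw [hderiv]
      have hymem : y ∈ Icc u w := ⟨le_trans huv (le_of_lt hy.1), le_of_lt hy.2⟩
      have := hant hvmem hymem (le_of_lt hy.1)
      linarith [hv1 ▸ this]
    have := hantf ⟨le_refl v, hvw⟩ ⟨hvx, hx.2⟩ hvx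
    linarith [hv0 ▸ this]

lemma log_le_half {x : ℝ} (hx : 1 ≤ x) : Real.log x ≤ (x - x⁻¹) / 2 := by
  set g : ℝ → ℝ := fun y => (y - y⁻¹) / 2 - Real.log y with hg
  have hder : ∀ y : ℝ, y ≠ 0 → HasDerivAt g ((1 - -(y ^ 2)⁻¹) / 2 - y⁻¹) y := by
    intro y hy
    exact (((hasDerivAt_id y).sub (hasDerivAt_inv hy)).div_const 2).sub (Real.hasDerivAt_log hy)
  have hmono : MonotoneOn g (Ici 1) := by
    apply monotoneOn_of_deriv_nonneg (convex_Ici 1)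
    · intro y hy
      have hy0 : y ≠ 0 := by simp only [mem_Ici] at hy; intro h; rw [h] at hy; linarith
      exact (hder y hy0).differentiableAt.continuousAt.continuousWithinAt
    · intro y hy
      rw [interior_Ici] at hy
      have hy0 : y ≠ 0 := by simp only [mem_Ioi] at hy; intro h; rw [h] at hy; linarith
      exact (hder y hy0).differentiableAt.differentiableWithinAt
    · intro y hy
      rw [interior_Ici] at hy
      simp only [mem_Ioi] at hy
      have hy0 : (0:ℝ) < y := by linarith
      rw [(hder y hy0.ne').deriv]
      have heq : (1 - -(y ^ 2)⁻¹) / 2 - y⁻¹ = (y - 1) ^ 2 / (2 * y ^ 2) := by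
        field_simp
        ring
      rw [heq]
      positivity
  have h1 : g 1 ≤ g x := hmono (by simp) hx hx
  have h2 : g 1 = 0 := by simp [hg]
  have h3 : g x = (x - x⁻¹) / 2 - Real.log x := rfl
  rw [h2, h3] at h1
  linarith

set_option maxHeartbeats 1000000 in
/-- Kearns–Saul inequality for `a > 1/2`. -/
lemma ks {a : ℝ} (ha1 : 1 / 2 < a) (ha2 : a < 1) (l : ℝ) :
    Real.log (1 - a + a * Real.exp l) ≤
      a * l + (a - 1 / 2) / Real.log (a / (1 - a)) * l ^ 2 / 2 := by
  have h0 : 0 < a := by linarith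
  have h1a : 0 < 1 - a := by linarith
  set L := Real.log (a / (1 - a)) with hLdef
  have hx1 : 1 < a / (1 - a) := (one_lt_div h1a).mpr (by linarith)
  have hL : 0 < L := Real.log_pos hx1
  set s := (a - 1 / 2) / L with hsdef
  have hs : 0 < s := div_pos (by linarith) hL
  clear_value L s
  have hK1 : a * (1 - a) ≤ s := by
    have h2 : L ≤ (a / (1 - a) - (a / (1 - a))⁻¹) / 2 := by
      rw [hLdef]; exact log_le_half (le_of_lt hx1)
    have h3 : (a / (1 - a) - (a / (1 - a))⁻¹) / 2 = (a - 1 / 2) / (a * (1 - a)) := by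
      rw [inv_div]
      field_simp
      ring
    rw [h3] at h2
    have hne2 : a - 1 / 2 ≠ 0 := ne_of_gt (by linarith)
    have h4 : (a - 1 / 2) / ((a - 1 / 2) / (a * (1 - a))) = a * (1 - a) := by
      rw [div_div_eq_mul_div, mul_comm, mul_div_assoc, div_self hne2, mul_one]
    calc a * (1 - a) = (a - 1 / 2) / ((a - 1 / 2) / (a * (1 - a))) := h4.symm
      _ ≤ (a - 1 / 2) / L := by
          apply div_le_div_of_nonneg_left (by linarith) hL h2
      _ = s := hsdef.symm
  suffices h : ff a s l ≤ 0 by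
    simp only [ff, Zf] at h
    linarith
  -- basic values
  have hff0 : ff a s 0 = 0 := by
    have : Zf a 0 = 1 := by simp [Zf]
    simp [ff, this]
  have ht0 : tf a 0 = a := by
    have : Zf a 0 = 1 := by simp [Zf]
    simp [tf, this]
  have hf10 : f1 a s 0 = 0 := by simp [f1, ht0]
  set l0 : ℝ := -(2 * L) with hl0def
  clear_value l0
  have hexpL : Real.exp L = a / (1 - a) := by
    rw [hLdef]; exact Real.exp_log (by positivity)
  have hexpl0 : Real.exp l0 = ((1 - a) / a) ^ 2 := by
    rw [hl0def, show -(2 * L) = -L + -L by ring, Real.exp_add, Real.exp_neg, hexpL, inv_div]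
    ring
  have hZl0 : Zf a l0 = (1 - a) / a := by
    rw [Zf, hexpl0]
    field_simp
    ring
  have htl0 : tf a l0 = 1 - a := by
    rw [tf, hexpl0, hZl0]
    field_simp
  have hlogZl0 : Real.log ((1 - a) / a) = -L := by
    rw [hLdef, ← Real.log_inv, inv_div]
  have hffl0 : ff a s l0 = 0 := by
    rw [ff, hZl0, hlogZl0, hl0def, hsdef]
    field_simp
    ring
  have hf1l0 : f1 a s l0 = 0 := by
    rw [f1, htl0, hl0def, hsdef]
    field_simp
    ring
  have htpos : ∀ x : ℝ, 0 < tf a x :=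
    fun x => div_pos (mul_pos h0 (Real.exp_pos x)) (Zpos h0 ha2 x)
  have htlt1 : ∀ x : ℝ, tf a x < 1 := by
    intro x
    rw [tf, div_lt_one (Zpos h0 ha2 x)]
    unfold Zf
    linarith
  rcases le_or_gt (1 - 4 * s) 0 with hD | hD
  · -- globally concave
    have hcc : ∀ x ∈ Icc (min l 0) (max l 0), f2 a s x ≤ 0 := by
      intro x _
      have h5 : tf a x * (1 - tf a x) ≤ 1 / 4 := by
        have hsq := sq_nonneg (tf a x - 1 / 2)
        linarith only [hsq]
      unfold f2
      linarith only [h5, hD]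
    exact concave_piece h0 ha2 (min_le_right l 0) (le_max_right l 0) hcc hff0 hf10 l
      ⟨min_le_left l 0, le_max_left l 0⟩
  · set r := Real.sqrt (1 - 4 * s) with hrdef
    have hr2 : r ^ 2 = 1 - 4 * s := Real.sq_sqrt (le_of_lt hD)
    clear_value r
    have hr0 : 0 ≤ r := by rw [hrdef]; exact Real.sqrt_nonneg _
    have hr1 : r < 1 := by
      by_contra hcon
      push_neg at hcon
      have h9 : 1 ≤ r ^ 2 := by nlinarith only [hcon]
      linarith only [h9, hr2, hs]
    set t1 := (1 - r) / 2 with ht1def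
    set t2 := (1 + r) / 2 with ht2def
    clear_value t1 t2
    have ht1pos : 0 < t1 := by rw [ht1def]; linarith
    have ht2lt : t2 < 1 := by rw [ht2def]; linarith
    have ht1lt2 : t1 ≤ t2 := by rw [ht1def, ht2def]; linarith
    have h1t1 : 0 < 1 - t1 := by rw [ht1def]; linarith
    have h1t2 : 0 < 1 - t2 := by linarith
    have hfact : ∀ t : ℝ, t * (1 - t) - s = -((t - t1) * (t - t2)) := by
      intro t
      rw [ht1def, ht2def]
      linear_combination (-1 / 4 : ℝ) * hr2
    have hat2 : t2 ≤ a := by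
      have h6 := hfact a
      have h7 : 0 ≤ (a - t1) * (a - t2) := by linarith only [h6, hK1]
      have h8 : 0 < a - t1 := by rw [ht1def]; linarith only [hr0, ha1]
      by_contra hcon
      push_neg at hcon
      have h9 : 0 < (a - t1) * (t2 - a) := mul_pos h8 (by linarith only [hcon])
      have h10 : (a - t1) * (t2 - a) = -((a - t1) * (a - t2)) := by ring
      linarith only [h7, h9, h10]
    have h1at1 : 1 - a ≤ t1 := by rw [ht1def]; rw [ht2def] at hat2; linarith
    have htmono : StrictMono (tf a) := by
      intro x y hxy
      rw [tf, tf, div_lt_div_iff₀ (Zpos h0 ha2 x) (Zpos h0 ha2 y)]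
      unfold Zf
      have hexy : Real.exp x < Real.exp y := Real.exp_lt_exp.mpr hxy
      have key : a * (1 - a) * Real.exp x < a * (1 - a) * Real.exp y :=
        mul_lt_mul_of_pos_left hexy (mul_pos h0 h1a)
      have expand : a * Real.exp y * (1 - a + a * Real.exp x) -
          a * Real.exp x * (1 - a + a * Real.exp y) =
          a * (1 - a) * Real.exp y - a * (1 - a) * Real.exp x := by ring
      linarith only [key, expand]
    set aa := Real.log ((1 - a) * t1 / (a * (1 - t1))) with haadef
    set bb := Real.log ((1 - a) * t2 / (a * (1 - t2))) with hbbdef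
    clear_value aa bb
    have ht2pos : 0 < t2 := lt_of_lt_of_le ht1pos ht1lt2
    have hargaa : 0 < (1 - a) * t1 / (a * (1 - t1)) :=
      div_pos (mul_pos h1a ht1pos) (mul_pos h0 h1t1)
    have hargbb : 0 < (1 - a) * t2 / (a * (1 - t2)) :=
      div_pos (mul_pos h1a ht2pos) (mul_pos h0 h1t2)
    have hexpaa : Real.exp aa = (1 - a) * t1 / (a * (1 - t1)) := by
      rw [haadef]; exact Real.exp_log hargaa
    have hexpbb : Real.exp bb = (1 - a) * t2 / (a * (1 - t2)) := by
      rw [hbbdef]; exact Real.exp_log hargbb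
    have htaa : tf a aa = t1 := by
      rw [tf, Zf, hexpaa]
      field_simp
      ring
    have htbb : tf a bb = t2 := by
      rw [tf, Zf, hexpbb]
      field_simp
      ring
    have hl0aa : l0 ≤ aa := by
      by_contra hcon
      push_neg at hcon
      have := htmono hcon
      rw [htaa, htl0] at this
      linarith
    have hbb0 : bb ≤ 0 := by
      by_contra hcon
      push_neg at hcon
      have := htmono hcon
      rw [htbb, ht0] at this
      linarith
    have haabb : aa ≤ bb := by
      by_contra hcon
      push_neg at hcon
      have := htmono hcon
      rw [htaa, htbb] at this
      linarith
    have hA : ∀ x ∈ Icc (min l l0) aa, ff a s x ≤ 0 := by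
      apply concave_piece h0 ha2 (min_le_right l l0) hl0aa _ hffl0 hf1l0
      intro x hx
      have hxle : tf a x ≤ t1 := by
        have := htmono.le_iff_le.mpr hx.2
        rwa [htaa] at this
      have hf := hfact (tf a x)
      have h9 : 0 ≤ (tf a x - t1) * (tf a x - t2) := by
        have := mul_nonneg (neg_nonneg.mpr (show tf a x - t1 ≤ 0 by linarith only [hxle]))
          (neg_nonneg.mpr (show tf a x - t2 ≤ 0 by linarith only [hxle, ht1lt2]))
        rwa [neg_mul_neg] at this
      unfold f2
      linarith only [hf, h9]
    have hB : ∀ x ∈ Icc bb (max l 0), ff a s x ≤ 0 := by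
      apply concave_piece h0 ha2 hbb0 (le_max_right l 0) ?hsgn hff0 hf10
      case hsgn =>
        intro x hx
        have hxge : t2 ≤ tf a x := by
          have := htmono.le_iff_le.mpr hx.1
          rwa [htbb] at this
        have hf := hfact (tf a x)
        have h9 : 0 ≤ (tf a x - t1) * (tf a x - t2) :=
          mul_nonneg (by linarith only [hxge, ht1lt2]) (by linarith only [hxge])
        unfold f2
        linarith only [hf, h9]
    have hfaa : ff a s aa ≤ 0 := hA aa ⟨le_trans (min_le_right l l0) hl0aa, le_refl aa⟩
    have hfbb : ff a s bb ≤ 0 := hB bb ⟨le_refl bb, le_trans hbb0 (le_max_right l 0)⟩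
    rcases le_total l aa with hcase | hcase
    · exact hA l ⟨min_le_left l l0, hcase⟩
    rcases le_total bb l with hcase2 | hcase2
    · exact hB l ⟨hcase2, le_max_left l 0⟩
    -- middle: aa ≤ l ≤ bb
    have hdff : Differentiable ℝ (ff a s) := fun x => (hasDerivAt_ff h0 ha2 s x).differentiableAt
    have hdf1 : Differentiable ℝ (f1 a s) := fun x => (hasDerivAt_f1 h0 ha2 s x).differentiableAt
    have hderiv : deriv (ff a s) = f1 a s := funext fun x => (hasDerivAt_ff h0 ha2 s x).deriv
    have hderiv1 : deriv (f1 a s) = f2 a s := funext fun x => (hasDerivAt_f1 h0 ha2 s x).deriv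
    have hconv : ConvexOn ℝ (Icc aa bb) (ff a s) := by
      apply convexOn_of_deriv2_nonneg (convex_Icc aa bb) hdff.continuous.continuousOn
        hdff.differentiableOn
      · rw [hderiv]
        exact hdf1.differentiableOn
      · intro x hx
        rw [interior_Icc] at hx
        have heq : deriv^[2] (ff a s) x = f2 a s x := by
          show deriv (deriv (ff a s)) x = f2 a s x
          rw [hderiv, hderiv1]
        rw [heq]
        have hx1 : t1 ≤ tf a x := by
          have := htmono.le_iff_le.mpr (le_of_lt hx.1)
          rwa [htaa] at this
        have hx2 : tf a x ≤ t2 := by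
          have := htmono.le_iff_le.mpr (le_of_lt hx.2)
          rwa [htbb] at this
        have hf := hfact (tf a x)
        have h9 : (tf a x - t1) * (tf a x - t2) ≤ 0 :=
          mul_nonpos_iff.mpr (Or.inl ⟨by linarith only [hx1], by linarith only [hx2]⟩)
        unfold f2
        linarith only [hf, h9]
    rcases eq_or_lt_of_le haabb with heq | hlt
    · have : l = aa := le_antisymm (heq ▸ hcase2) hcase
      exact this ▸ hfaa
    · set θ := (l - aa) / (bb - aa) with hθdef
      have hba : 0 < bb - aa := by linarith
      have hθ0 : 0 ≤ θ := div_nonneg (by linarith) (le_of_lt hba)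
      have hθ1 : θ ≤ 1 := by
        rw [hθdef, div_le_one hba]
        linarith
      have hkey := hconv.2 (left_mem_Icc.mpr haabb) (right_mem_Icc.mpr haabb)
        (by linarith : (0:ℝ) ≤ 1 - θ) hθ0 (by ring)
      have harg : (1 - θ) • aa + θ • bb = l := by
        simp only [smul_eq_mul]
        rw [hθdef]
        field_simp
        ring
      rw [harg] at hkey
      simp only [smul_eq_mul] at hkey
      have h1' : (1 - θ) * ff a s aa ≤ 0 := by
        have := mul_le_mul_of_nonneg_left hfaa (by linarith : (0:ℝ) ≤ 1 - θ)
        simpa using this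
      have h2' : θ * ff a s bb ≤ 0 := by
        have := mul_le_mul_of_nonneg_left hfbb hθ0
        simpa using this
      linarith only [hkey, h1', h2']

/-- Kearns–Saul inequality for all `a ∈ (0,1)`, `a ≠ 1/2`. -/
lemma ks_all {a : ℝ} (h0 : 0 < a) (h1 : a < 1) (hne : a ≠ 1 / 2) (l : ℝ) :
    Real.log (1 - a + a * Real.exp l) ≤
      a * l + (a - 1 / 2) / Real.log (a / (1 - a)) * l ^ 2 / 2 := by
  rcases lt_or_gt_of_ne hne with h | h
  · have h' := ks (a := 1 - a) (by linarith) (by linarith) (-l)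
    have e1 : (1:ℝ) - (1 - a) = a := by ring
    rw [e1] at h'
    have hZpos : 0 < 1 - a + a * Real.exp l := by
      have := mul_pos h0 (Real.exp_pos l); linarith
    have e3 : a + (1 - a) * Real.exp (-l) = Real.exp (-l) * (1 - a + a * Real.exp l) := by
      rw [Real.exp_neg]
      have hel := Real.exp_pos l
      field_simp
      ring
    rw [e3, Real.log_mul (ne_of_gt (Real.exp_pos _)) (ne_of_gt hZpos), Real.log_exp] at h'
    have e2 : Real.log ((1 - a) / a) = -Real.log (a / (1 - a)) := by
      rw [← Real.log_inv, inv_div]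
    rw [e2] at h'
    have e4 : (1 - a - 1 / 2) / -Real.log (a / (1 - a)) =
        (a - 1 / 2) / Real.log (a / (1 - a)) := by
      rw [div_neg, ← neg_div]
      congr 1
      ring
    rw [e4] at h'
    have e5 : (-l) ^ 2 = l ^ 2 := by ring
    rw [e5] at h'
    linarith
  · exact ks h h1 l

/-- Donsker–Varadhan / Gibbs bound for the indicator test. -/
lemma dv_bound {X : Type*} [Fintype X] (P₀ P₁ : X → ℝ)
    (hP₀pos : ∀ x, 0 < P₀ x) (hP₀sum : ∑ x, P₀ x = 1)
    (hP₁nonneg : ∀ x, 0 ≤ P₁ x) (hP₁sum : ∑ x, P₁ x = 1)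
    (Φ : X → ℝ) (hΦ : ∀ x, Φ x = 0 ∨ Φ x = 1) (α : ℝ) (hα : α = ∑ x, P₀ x * Φ x) (l : ℝ) :
    l * (∑ x, P₁ x * Φ x) - Real.log (1 - α + α * Real.exp l) ≤
      ∑ x, P₁ x * Real.log (P₁ x / P₀ x) := by
  set Z := 1 - α + α * Real.exp l with hZdef
  have hZsum : ∑ x, P₀ x * Real.exp (l * Φ x) = Z := by
    have hterm : ∀ x, P₀ x * Real.exp (l * Φ x) = P₀ x + (Real.exp l - 1) * (P₀ x * Φ x) := by
      intro x
      rcases hΦ x with h | h <;> rw [h] <;> simp <;> ring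
    rw [Finset.sum_congr rfl (fun x _ => hterm x), Finset.sum_add_distrib, ← Finset.mul_sum,
      hP₀sum, ← hα, hZdef]
    ring
  have hXne : Nonempty X := by
    by_contra hemp
    rw [not_nonempty_iff] at hemp
    rw [Finset.univ_eq_empty, Finset.sum_empty] at hP₀sum
    norm_num at hP₀sum
  have huniv : (Finset.univ : Finset X).Nonempty := Finset.univ_nonempty
  have hZpos : 0 < Z := by
    rw [← hZsum]
    exact Finset.sum_pos (fun x _ => mul_pos (hP₀pos x) (Real.exp_pos _)) huniv
  have key : ∀ x, P₁ x - P₀ x * Real.exp (l * Φ x) / Z ≤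
      P₁ x * Real.log (P₁ x / P₀ x) - l * (P₁ x * Φ x) + P₁ x * Real.log Z := by
    intro x
    have hQ : 0 < P₀ x * Real.exp (l * Φ x) / Z := by
      have := hP₀pos x
      positivity
    rcases eq_or_lt_of_le (hP₁nonneg x) with h | h
    · rw [← h]
      simp
      linarith
    · have hP1 : 0 < P₁ x := h
      have hlog1 : Real.log (P₀ x * Real.exp (l * Φ x) / Z) =
          Real.log (P₀ x) + l * Φ x - Real.log Z := by
        rw [Real.log_div (ne_of_gt (mul_pos (hP₀pos x) (Real.exp_pos _))) (ne_of_gt hZpos),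
          Real.log_mul (ne_of_gt (hP₀pos x)) (ne_of_gt (Real.exp_pos _)), Real.log_exp]
      have hmain := Real.log_le_sub_one_of_pos (div_pos hQ hP1)
      rw [Real.log_div (ne_of_gt hQ) (ne_of_gt hP1)] at hmain
      have h2 := mul_le_mul_of_nonneg_left hmain (le_of_lt hP1)
      have h3 : P₁ x * (P₀ x * Real.exp (l * Φ x) / Z / P₁ x - 1) =
          P₀ x * Real.exp (l * Φ x) / Z - P₁ x := by
        field_simp
      rw [h3, hlog1] at h2
      have hlogpq : Real.log (P₁ x / P₀ x) = Real.log (P₁ x) - Real.log (P₀ x) :=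
        Real.log_div (ne_of_gt hP1) (ne_of_gt (hP₀pos x))
      rw [hlogpq]
      linarith only [h2]
  have hsum := Finset.sum_le_sum (s := Finset.univ) (fun x _ => key x)
  have hlhs : ∑ x, (P₁ x - P₀ x * Real.exp (l * Φ x) / Z) = 0 := by
    rw [Finset.sum_sub_distrib, hP₁sum, ← Finset.sum_div, hZsum, div_self (ne_of_gt hZpos)]
    ring
  have hrhs : ∑ x, (P₁ x * Real.log (P₁ x / P₀ x) - l * (P₁ x * Φ x) + P₁ x * Real.log Z) =
      (∑ x, P₁ x * Real.log (P₁ x / P₀ x)) - l * (∑ x, P₁ x * Φ x) + Real.log Z := by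
    rw [Finset.sum_add_distrib, Finset.sum_sub_distrib, ← Finset.mul_sum, ← Finset.sum_mul,
      hP₁sum]
    ring
  rw [hlhs, hrhs] at hsum
  linarith

/-- Classical sub-Gaussian error bound for hypothesis testing:
`α + β ≥ 1 − √((α−1/2)/ln(α/(1−α)))·√(2 KL(P₁‖P₀))`. -/
theorem classical_error_bound_subgaussian {X : Type*} [Fintype X]
    (P₀ P₁ : X → ℝ)
    (hP₀pos : ∀ x, 0 < P₀ x) (hP₀sum : ∑ x, P₀ x = 1)
    (hP₁nonneg : ∀ x, 0 ≤ P₁ x) (hP₁sum : ∑ x, P₁ x = 1)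
    (Φ : X → ℝ) (hΦ : ∀ x, Φ x = 0 ∨ Φ x = 1)
    (α β : ℝ)
    (hα : α = ∑ x, P₀ x * Φ x) (hαmem : α ∈ Set.Ioo (0:ℝ) 1) (hα2 : α ≠ 1/2)
    (hβ : β = 1 - ∑ x, P₁ x * Φ x) :
    α + β ≥ 1 - Real.sqrt ((α - 1/2) / Real.log (α / (1 - α))) *
      Real.sqrt (2 * ∑ x, P₁ x * Real.log (P₁ x / P₀ x)) := by
  obtain ⟨hα0, hα1⟩ := hαmem
  have h1a : 0 < 1 - α := by linarith
  set p := ∑ x, P₁ x * Φ x with hpdef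
  set KL := ∑ x, P₁ x * Real.log (P₁ x / P₀ x) with hKLdef
  clear_value p KL
  set L := Real.log (α / (1 - α)) with hLdef
  set s := (α - 1 / 2) / L with hsdef
  clear_value s
  have hs : 0 < s := by
    rw [hsdef]
    rcases lt_or_gt_of_ne hα2 with h | h
    · have hL : L < 0 := Real.log_neg (by positivity) ((div_lt_one h1a).mpr (by linarith))
      exact div_pos_of_neg_of_neg (by linarith) hL
    · have hL : 0 < L := Real.log_pos ((one_lt_div h1a).mpr (by linarith))
      exact div_pos (by linarith) hL
  rw [hβ]
  have main : p - α ≤ Real.sqrt s * Real.sqrt (2 * KL) := by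
    rcases le_or_gt p α with h | h
    · have : 0 ≤ Real.sqrt s * Real.sqrt (2 * KL) :=
        mul_nonneg (Real.sqrt_nonneg _) (Real.sqrt_nonneg _)
      linarith
    · set lam := (p - α) / s with hlamdef
      have hdv := dv_bound P₀ P₁ hP₀pos hP₀sum hP₁nonneg hP₁sum Φ hΦ α hα lam
      have hks := ks_all hα0 hα1 hα2 lam
      rw [← hLdef, ← hsdef] at hks
      rw [← hpdef, ← hKLdef] at hdv
      have hKLge : (p - α) ^ 2 / (2 * s) ≤ KL := by
        have h1 : lam * p - (α * lam + s * lam ^ 2 / 2) ≤ KL := by linarith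
        have h2 : lam * p - (α * lam + s * lam ^ 2 / 2) = (p - α) ^ 2 / (2 * s) := by
          rw [hlamdef]
          field_simp
          ring
        linarith
      have hsq : (p - α) ^ 2 ≤ s * (2 * KL) := by
        have hstep : (p - α) ^ 2 / (2 * s) * (2 * s) ≤ KL * (2 * s) :=
          mul_le_mul_of_nonneg_right hKLge (by positivity)
        have : (p - α) ^ 2 / (2 * s) * (2 * s) = (p - α) ^ 2 := by
          field_simp
        linarith only [hstep, this]
      calc p - α = Real.sqrt ((p - α) ^ 2) := (Real.sqrt_sq (by linarith)).symm
        _ ≤ Real.sqrt (s * (2 * KL)) := Real.sqrt_le_sqrt hsq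
        _ = Real.sqrt s * Real.sqrt (2 * KL) := Real.sqrt_mul (le_of_lt hs) _
  linarith
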